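/- If ⟨A, F⟩ is a subdirect product of matrices ⟨A_i, F_i⟩ (non-indexed sense, F nonempty), then the reduction ⟨A, F⟩* = ⟨A/Ω^A F, F/Ω^A F⟩ embeds as a subdirect product into the non-indexed product of the reductions ⟨A_i, F_i⟩*; the map a/Ω^A F ↦ ⟨a(i)/Ω^{A_i}F_i : i ∈ I⟩ is a well-defined injective homomorphism. -/
import Mathlib


/-- An algebraic language: a family of operation symbols indexed by arity.
(Following the paper, there are no nullary symbols; constants are treated as
unary constant operations where needed.) -/
structure Lang : Type 1 where
  ops : ℕ → Type

/-- An algebra for a language `L`. -/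
structure Alg (L : Lang) : Type 1 where
  carrier : Type
  interp : ∀ {n : ℕ}, L.ops n → (Fin n → carrier) → carrier

/-- Terms of the language `L` over a type `V` of variables. -/
inductive Term (L : Lang) (V : Type) : Type
  | var : V → Term L V
  | op : ∀ {n : ℕ}, L.ops n → (Fin n → Term L V) → Term L V

/-- Evaluation of a term in an algebra under an assignment of the variables. -/
def Term.eval {L : Lang} {V : Type} (A : Alg L) (v : V → A.carrier) :
    Term L V → A.carrier
  | .var x => v x
  | .op f ts => A.interp f (fun i => Term.eval A v (ts i))

/-- `θ` is a congruence of the algebra `A`. -/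
def IsCongruence {L : Lang} (A : Alg L) (θ : A.carrier → A.carrier → Prop) : Prop :=
  Equivalence θ ∧
    ∀ (n : ℕ) (f : L.ops n) (x y : Fin n → A.carrier),
      (∀ i, θ (x i) (y i)) → θ (A.interp f x) (A.interp f y)

/-- A relation `θ` is compatible with a subset `F`: related elements are either
both in or both out of `F` (stated one-sidedly; symmetry gives the rest). -/
def Compatible {L : Lang} (A : Alg L) (F : Set A.carrier)
    (θ : A.carrier → A.carrier → Prop) : Prop :=
  ∀ a b : A.carrier, θ a b → a ∈ F → b ∈ F

/-- `θ` is the Leibniz congruence of `F` on `A`: the largest congruence of `A`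
compatible with `F`. -/
def IsLeibniz {L : Lang} (A : Alg L) (F : Set A.carrier)
    (θ : A.carrier → A.carrier → Prop) : Prop :=
  IsCongruence A θ ∧ Compatible A F θ ∧
    ∀ θ', IsCongruence A θ' → Compatible A F θ' → ∀ a b, θ' a b → θ a b

/-- The non-indexed product language of a family of languages: its `n`-ary
symbols are `I`-indexed families of `n`-ary terms of the respective languages. -/
def prodLang {ι : Type} (L : ι → Lang) : Lang where
  ops n := ∀ i, Term (L i) (Fin n)

/-- The non-indexed product of a family of algebras: the family-of-terms
operations act coordinatewise. -/
def prodAlg {ι : Type} {L : ι → Lang} (A : ∀ i, Alg (L i)) : Alg (prodLang L) where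
  carrier := ∀ i, (A i).carrier
  interp f x i := Term.eval (A i) (fun k => x k i) (f i)

/-- A subset `S` of an algebra is closed under the operations. -/
def OpClosed {L : Lang} (A : Alg L) (S : Set A.carrier) : Prop :=
  ∀ (n : ℕ) (f : L.ops n) (x : Fin n → A.carrier),
    (∀ i, x i ∈ S) → A.interp f x ∈ S

/-- The subalgebra of `A` with universe the closed subset `S`. -/
def subAlg {L : Lang} (A : Alg L) (S : Set A.carrier) (h : OpClosed A S) :
    Alg L where
  carrier := {x // x ∈ S}
  interp f x := ⟨A.interp f (fun i => (x i).1), h _ f _ (fun i => (x i).2)⟩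

/-- The quotient of an algebra by (the setoid of) a congruence; operations are
computed on arbitrarily chosen representatives. -/
noncomputable def quotAlg {L : Lang} (A : Alg L) (s : Setoid A.carrier) :
    Alg L where
  carrier := Quotient s
  interp f x := Quotient.mk s (A.interp f (fun i => (x i).out))

section Aux

open Classical

variable {L : Lang}

/-- Prepend a value to a valuation. -/
def v0 {α : Type _} (x : α) (v : ℕ → α) : ℕ → α
  | 0 => x
  | n + 1 => v n

/-- A bound on the variables occurring in a term. -/
def bnd : Term L ℕ → ℕ
  | .var n => n + 1
  | .op _ ts => Finset.univ.sup fun j => bnd (ts j)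

/-- Congruences are preserved by term evaluation. -/
lemma eval_rel (A : Alg L) {θ : A.carrier → A.carrier → Prop} (hc : IsCongruence A θ)
    {V : Type} (v w : V → A.carrier) (h : ∀ k, θ (v k) (w k)) :
    ∀ t : Term L V, θ (Term.eval A v t) (Term.eval A w t)
  | .var x => h x
  | .op f ts => hc.2 _ f _ _ fun j => eval_rel A hc v w h (ts j)

/-- Substitute a term for variable `0`. -/
def sub0 (s : Term L ℕ) : Term L ℕ → Term L ℕ
  | .var 0 => s
  | .var (n + 1) => .var (n + 1)
  | .op f ts => .op f fun j => sub0 s (ts j)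

lemma eval_sub0 (A : Alg L) (s : Term L ℕ) (v : ℕ → A.carrier) :
    ∀ t, Term.eval A v (sub0 s t)
      = Term.eval A (v0 (Term.eval A v s) (fun n => v (n + 1))) t
  | .var 0 => rfl
  | .var (n + 1) => rfl
  | .op f ts => by
      show A.interp f _ = A.interp f _
      congr 1; funext j; exact eval_sub0 A s v (ts j)

/-- Shift all variables except `0` up by `m`. -/
def shiftT (m : ℕ) : Term L ℕ → Term L ℕ
  | .var 0 => .var 0
  | .var (n + 1) => .var (n + 1 + m)
  | .op f ts => .op f fun j => shiftT m (ts j)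

lemma eval_shiftT (A : Alg L) (m : ℕ) (u : A.carrier) (w : ℕ → A.carrier) :
    ∀ t, Term.eval A (v0 u w) (shiftT m t)
      = Term.eval A (v0 u (fun n => w (n + m))) t
  | .var 0 => rfl
  | .var (n + 1) => by
      show v0 u w (n + 1 + m) = w (n + m)
      have : n + 1 + m = (n + m) + 1 := by omega
      rw [this]
      rfl
  | .op f ts => by
      show A.interp f _ = A.interp f _
      congr 1; funext j; exact eval_shiftT A m u w (ts j)

/-- The polynomial Leibniz relation. -/
def Lam (A : Alg L) (F : Set A.carrier) (x y : A.carrier) : Prop :=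
  ∀ (t : Term L ℕ) (v : ℕ → A.carrier),
    Term.eval A (v0 x v) t ∈ F ↔ Term.eval A (v0 y v) t ∈ F

lemma lam_ops (A : Alg L) (F : Set A.carrier) (n : ℕ) (f : L.ops n)
    (x y : Fin n → A.carrier) (hxy : ∀ j, Lam A F (x j) (y j)) :
    Lam A F (A.interp f x) (A.interp f y) := by
  intro t v
  have H : ∀ k, k ≤ n →
      (Term.eval A (v0 (A.interp f x) v) t ∈ F ↔
       Term.eval A (v0 (A.interp f (fun j => if j.val < k then y j else x j)) v) t ∈ F) := by
    intro k hk
    induction k with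
    | zero =>
        have : (fun j : Fin n => if j.val < 0 then y j else x j) = x := by
          funext j; simp
        rw [this]
    | succ k ih =>
        have hk' : k < n := by omega
        refine (ih (by omega)).trans ?_
        set w : ℕ → A.carrier := fun m =>
          if h : m < n then (if m < k then y ⟨m, h⟩ else x ⟨m, h⟩) else v (m - n) with hwdef
        set s : Term L ℕ :=
          .op f (fun j => if j.val = k then .var 0 else .var (j.val + 1)) with hsdef
        have comp : ∀ u : A.carrier, Term.eval A (v0 u w) (sub0 s (shiftT n t))
            = Term.eval A
                (v0 (A.interp f (fun j => if j.val = k then u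
                    else if j.val < k then y j else x j)) v) t := by
          intro u
          rw [eval_sub0]
          have hw1 : (fun n' => v0 u w (n' + 1)) = w := rfl
          rw [hw1, eval_shiftT]
          have hv : (fun m => w (m + n)) = v := by
            funext m
            simp only [hwdef]
            rw [dif_neg (by omega)]
            congr 1; omega
          rw [hv]
          have hs : Term.eval A (v0 u w) s
              = A.interp f (fun j => if j.val = k then u
                  else if j.val < k then y j else x j) := by
            show A.interp f _ = A.interp f _
            congr 1; funext j
            beta_reduce
            by_cases hj : j.val = k
            · simp only [if_pos hj]
              rfl
            · have h1 : Term.eval A (v0 u w) (if j.val = k then (.var 0 : Term L ℕ)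
                  else .var (j.val + 1)) = w j.val := by
                rw [if_neg hj]; rfl
              rw [h1, if_neg hj]
              simp only [hwdef]
              rw [dif_pos j.2]
          rw [hs]
        have key := hxy ⟨k, hk'⟩ (sub0 s (shiftT n t)) w
        rw [comp, comp] at key
        have e1 : (fun j : Fin n => if j.val = k then x ⟨k, hk'⟩
            else if j.val < k then y j else x j)
            = fun j : Fin n => if j.val < k then y j else x j := by
          funext j
          by_cases hj : j.val = k
          · have : j = ⟨k, hk'⟩ := Fin.ext hj
            subst this
            simp
          · rw [if_neg hj]
        have e2 : (fun j : Fin n => if j.val = k then y ⟨k, hk'⟩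
            else if j.val < k then y j else x j)
            = fun j : Fin n => if j.val < k + 1 then y j else x j := by
          funext j
          by_cases hj : j.val = k
          · have : j = ⟨k, hk'⟩ := Fin.ext hj
            subst this
            simp
          · rw [if_neg hj]
            by_cases h2 : j.val < k
            · rw [if_pos h2, if_pos (by omega)]
            · rw [if_neg h2, if_neg (by omega)]
        rw [e1, e2] at key
        exact key
  have hn := H n le_rfl
  have : (fun j : Fin n => if j.val < n then y j else x j) = y := by
    funext j; rw [if_pos j.2]
  rw [this] at hn
  exact hn

lemma lam_congruence (A : Alg L) (F : Set A.carrier) : IsCongruence A (Lam A F) := by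
  refine ⟨⟨fun a t v => Iff.rfl, fun h t v => (h t v).symm,
    fun h1 h2 t v => (h1 t v).trans (h2 t v)⟩, fun n f x y hxy => lam_ops A F n f x y hxy⟩

lemma lam_compatible (A : Alg L) (F : Set A.carrier) : Compatible A F (Lam A F) :=
  fun a b h ha => (h (.var 0) (fun _ => a)).mp ha

lemma lam_le_leibniz (A : Alg L) (F : Set A.carrier)
    {θ : A.carrier → A.carrier → Prop} (hθ : IsLeibniz A F θ) :
    ∀ x y, Lam A F x y → θ x y :=
  hθ.2.2 _ (lam_congruence A F) (lam_compatible A F)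

/-- Remap an ℕ-variable term into `Fin (m+2)`: variable 0 goes to 0,
variable `n+1` goes to `n+2`. -/
def remapH (m : ℕ) : Term L ℕ → Term L (Fin (m + 2))
  | .var 0 => .var ⟨0, by omega⟩
  | .var (n + 1) => .var (if h : n + 2 < m + 2 then ⟨n + 2, h⟩ else ⟨0, by omega⟩)
  | .op f ts => .op f fun j => remapH m (ts j)

lemma eval_remapH (A : Alg L) (m : ℕ) (w : Fin (m + 2) → A.carrier) (x : A.carrier)
    (v : ℕ → A.carrier) (h0 : w ⟨0, by omega⟩ = x)
    (hw : ∀ (n : ℕ) (h : n + 2 < m + 2), w ⟨n + 2, h⟩ = v n) :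
    ∀ t, bnd t ≤ m + 1 → Term.eval A w (remapH m t) = Term.eval A (v0 x v) t
  | .var 0, _ => h0
  | .var (n + 1), ht => by
      have hb : bnd (Term.var (n + 1) : Term L ℕ) = n + 2 := rfl
      have hn : n + 2 < m + 2 := by omega
      show w (if h : n + 2 < m + 2 then ⟨n + 2, h⟩ else ⟨0, by omega⟩) = v n
      rw [dif_pos hn]
      exact hw n hn
  | .op f ts, ht => by
      show A.interp f _ = A.interp f _
      congr 1; funext j
      refine eval_remapH A m w x v h0 hw (ts j) ?_
      exact le_trans (Finset.le_sup (f := fun j => bnd (ts j)) (Finset.mem_univ j)) ht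

/-- Term evaluation in a quotient algebra. -/
lemma quot_eval (A : Alg L) (s : Setoid A.carrier) (hc : IsCongruence A s.r)
    {V : Type} (w : V → A.carrier) :
    ∀ t : Term L V, Term.eval (quotAlg A s) (fun k => Quotient.mk s (w k)) t
      = Quotient.mk s (Term.eval A w t)
  | .var x => rfl
  | .op f ts => by
      show Quotient.mk s (A.interp f fun j =>
        (Term.eval (quotAlg A s) (fun k => Quotient.mk s (w k)) (ts j)).out) = _
      refine Quotient.sound ?_
      refine hc.2 _ f _ _ fun j => ?_
      have hq := quot_eval A s hc w (ts j)
      rw [hq]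
      exact Quotient.exact (Quotient.out_eq (Quotient.mk s (Term.eval A w (ts j))))

end Aux
/-- if `⟨A, F⟩` (given by the closed set `S` with surjective
projections and `F` nonempty) is a subdirect product of the matrices
`⟨A i, Fi i⟩`, then the reduction `⟨A, F⟩* = ⟨A/θ, F/θ⟩` (where `θ = Ω^A F`)
embeds as a subdirect product into the non-indexed product of the reductions
`⟨A i, Fi i⟩*`: the map `a/θ ↦ ⟨a(i)/θᵢ : i ∈ I⟩` is a well-defined injective
homomorphism with surjective projections, which moreover reflects the quotient
filters. -/
theorem reduction_of_subdirect_product_embeds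
    {ι : Type} {L : ι → Lang} (A : ∀ i, Alg (L i))
    (Fi : ∀ i, Set (A i).carrier)
    (S : Set (prodAlg A).carrier) (hS : OpClosed (prodAlg A) S)
    (hsurj : ∀ i, Function.Surjective
      (fun s : (subAlg (prodAlg A) S hS).carrier => s.1 i))
    (θ : (subAlg (prodAlg A) S hS).carrier →
         (subAlg (prodAlg A) S hS).carrier → Prop)
    (hθ : IsLeibniz (subAlg (prodAlg A) S hS)
      {s : (subAlg (prodAlg A) S hS).carrier | ∀ i, s.1 i ∈ Fi i} θ)
    (θi : ∀ i, (A i).carrier → (A i).carrier → Prop)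
    (hθi : ∀ i, IsLeibniz (A i) (Fi i) (θi i))
    (hne : ∃ s : (subAlg (prodAlg A) S hS).carrier, ∀ i, s.1 i ∈ Fi i) :
    -- the setoids of the Leibniz congruences
    let sd : Setoid (subAlg (prodAlg A) S hS).carrier := ⟨θ, hθ.1.1⟩
    let si : ∀ i, Setoid (A i).carrier := fun i => ⟨θi i, (hθi i).1.1⟩
    -- the map on representatives
    let g : (subAlg (prodAlg A) S hS).carrier →
        (prodAlg (fun i => quotAlg (A i) (si i))).carrier :=
      fun a i => Quotient.mk (si i) (a.1 i)
    -- the induced map on the reduction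
    let gQ : (quotAlg (subAlg (prodAlg A) S hS) sd).carrier →
        (prodAlg (fun i => quotAlg (A i) (si i))).carrier :=
      fun q => g q.out
    -- well-definedness and injectivity
    (∀ a c : (subAlg (prodAlg A) S hS).carrier, g a = g c ↔ θ a c) ∧
    (∀ a, gQ (Quotient.mk sd a) = g a) ∧
    Function.Injective gQ ∧
    -- homomorphism
    (∀ (n : ℕ) (f : (prodLang L).ops n)
        (x : Fin n → (quotAlg (subAlg (prodAlg A) S hS) sd).carrier),
      gQ ((quotAlg (subAlg (prodAlg A) S hS) sd).interp f x) =
        (prodAlg (fun i => quotAlg (A i) (si i))).interp f (fun k => gQ (x k))) ∧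
    -- the image is a subdirect product of the reductions
    (∀ i, Function.Surjective (fun q => gQ q i)) ∧
    -- the embedding identifies the quotient filter with the product of the
    -- quotient filters
    (∀ q, (∀ i, gQ q i ∈ Quotient.mk (si i) '' Fi i) ↔
      ∃ a : (subAlg (prodAlg A) S hS).carrier,
        Quotient.mk sd a = q ∧ ∀ i, a.1 i ∈ Fi i) := by
  
  intro sd si g gQ
  classical
  -- the key equivalence: θ a c ↔ pointwise θi
  have key : ∀ a c : (subAlg (prodAlg A) S hS).carrier,
      θ a c ↔ ∀ i, θi i (a.1 i) (c.1 i) := by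
    intro a c
    constructor
    · intro hac i
      apply lam_le_leibniz (A i) (Fi i) (hθi i)
      intro t v
      choose vhat hv using fun n => hsurj i (v n)
      obtain ⟨s₀, hs₀⟩ := hne
      set m := bnd t with hm
      set gop : (prodLang L).ops (m + 2) :=
        Function.update (fun j => (.var 1 : Term (L j) (Fin (m + 2)))) i (remapH m t)
        with hgop
      set Xf : (subAlg (prodAlg A) S hS).carrier →
          Fin (m + 2) → (subAlg (prodAlg A) S hS).carrier :=
        fun z k => if k.val = 0 then z else if k.val = 1 then s₀ else vhat (k.val - 2)
        with hXf
      set G : (subAlg (prodAlg A) S hS).carrier → (subAlg (prodAlg A) S hS).carrier :=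
        fun z => (subAlg (prodAlg A) S hS).interp gop (Xf z) with hG
      have hGθ : θ (G a) (G c) := by
        refine hθ.1.2 _ gop (Xf a) (Xf c) fun k => ?_
        by_cases h0 : k.val = 0
        · simp only [hXf, if_pos h0]; exact hac
        · simp only [hXf, if_neg h0]; exact hθ.1.1.refl _
      have coordG : ∀ z : (subAlg (prodAlg A) S hS).carrier,
          (G z).1 i = Term.eval (A i) (v0 (z.1 i) v) t := by
        intro z
        show Term.eval (A i) (fun k => (Xf z k).1 i) (gop i) = _
        rw [hgop, Function.update_self]
        refine eval_remapH (A i) m _ (z.1 i) v ?_ ?_ t (by omega)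
        · simp [hXf]
        · intro n h
          simp only [hXf]
          rw [if_neg (by simp), if_neg (by simp)]
          simp [hv]
      have coordO : ∀ (z : (subAlg (prodAlg A) S hS).carrier) (j : ι), j ≠ i →
          (G z).1 j = s₀.1 j := by
        intro z j hj
        show Term.eval (A j) (fun k => (Xf z k).1 j) (gop j) = _
        rw [hgop, Function.update_of_ne hj]
        show (Xf z 1).1 j = s₀.1 j
        simp [hXf]
      have hmem : ∀ z : (subAlg (prodAlg A) S hS).carrier,
          ((∀ j, (G z).1 j ∈ Fi j) ↔ Term.eval (A i) (v0 (z.1 i) v) t ∈ Fi i) := by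
        intro z
        constructor
        · intro h
          have := h i
          rwa [coordG z] at this
        · intro h j
          by_cases hj : j = i
          · subst hj; rwa [coordG z]
          · rw [coordO z j hj]; exact hs₀ j
      have h1 : (∀ j, (G a).1 j ∈ Fi j) ↔ (∀ j, (G c).1 j ∈ Fi j) :=
        ⟨fun h => hθ.2.1 _ _ hGθ h, fun h => hθ.2.1 _ _ (hθ.1.1.symm hGθ) h⟩
      exact (hmem a).symm.trans (h1.trans (hmem c))
    · intro h
      refine hθ.2.2 (fun a c => ∀ i, θi i (a.1 i) (c.1 i)) ?_ ?_ a c h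
      · refine ⟨⟨fun z i => (hθi i).1.1.refl _,
          fun hz i => (hθi i).1.1.symm (hz i),
          fun h1 h2 i => (hθi i).1.1.trans (h1 i) (h2 i)⟩, ?_⟩
        intro n f x y hxy i
        exact eval_rel (A i) (hθi i).1 _ _ (fun k => hxy k i) (f i)
      · intro a c hac ha i
        exact (hθi i).2.1 _ _ (hac i) (ha i)
  have p1 : ∀ a c : (subAlg (prodAlg A) S hS).carrier, g a = g c ↔ θ a c := by
    intro a c
    rw [key a c]
    constructor
    · intro h i
      exact Quotient.exact (congrFun h i)
    · intro h
      funext i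
      exact Quotient.sound (h i)
  have p2 : ∀ a, gQ (Quotient.mk sd a) = g a := by
    intro a
    exact (p1 _ _).mpr (Quotient.exact (Quotient.out_eq (Quotient.mk sd a)))
  refine ⟨p1, p2, ?_, ?_, ?_, ?_⟩
  · intro q r h
    rw [← Quotient.out_eq q, ← Quotient.out_eq r]
    exact Quotient.sound ((p1 _ _).mp h)
  · intro n f x
    have lhs : gQ ((quotAlg (subAlg (prodAlg A) S hS) sd).interp f x)
        = g ((subAlg (prodAlg A) S hS).interp f (fun k => (x k).out)) := p2 _
    rw [lhs]
    funext i
    show Quotient.mk (si i) (Term.eval (A i) (fun k => ((x k).out).1 i) (f i))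
      = Term.eval (quotAlg (A i) (si i))
          (fun k => Quotient.mk (si i) (((x k).out).1 i)) (f i)
    exact (quot_eval (A i) (si i) (hθi i).1 _ (f i)).symm
  · intro i q'
    obtain ⟨s, hs⟩ := hsurj i q'.out
    have hs' : s.1 i = q'.out := hs
    refine ⟨Quotient.mk sd s, ?_⟩
    show gQ (Quotient.mk sd s) i = q'
    rw [p2]
    show Quotient.mk (si i) (s.1 i) = q'
    rw [hs']
    exact Quotient.out_eq q'
  · intro q
    constructor
    · intro h
      refine ⟨q.out, Quotient.out_eq q, fun i => ?_⟩
      obtain ⟨b, hb, heq⟩ := h i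
      have hb2 : θi i b (q.out.1 i) := Quotient.exact heq
      exact (hθi i).2.1 _ _ hb2 hb
    · rintro ⟨a, rfl, ha⟩
      intro i
      rw [p2]
      exact ⟨a.1 i, ha i, rfl⟩
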